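/- arXiv:1612.06767 — 3 statements merged into one kernel-verified Lean document; each statement's English description precedes it below -/
import Mathlib

section
/- For all convex bodies K, C in R^n, the chain (1+s(K))·r(K,−C) ≤ r(K,−C) + R(K,C) ≤ s(C)·r(K,C) + R(K,C) ≤ (1/2)(1+s(C))·D(K,C) holds. -/
open Pointwise

/-- A convex body: compact, convex, with nonempty interior. -/
def IsBody {n : ℕ} (K : Set (Fin n → ℝ)) : Prop :=
  Convex ℝ K ∧ IsCompact K ∧ (interior K).Nonempty

/-- Circumradius of `K` w.r.t. `C`: smallest `ρ > 0` with `K` contained in a translate of `ρ • C`. -/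
noncomputable def circR {n : ℕ} (K C : Set (Fin n → ℝ)) : ℝ :=
  sInf {ρ : ℝ | 0 < ρ ∧ ∃ t : Fin n → ℝ, K ⊆ t +ᵥ ρ • C}

/-- Inradius of `K` w.r.t. `C`: largest `ρ ≥ 0` with a translate of `ρ • C` inside `K`. -/
noncomputable def inrad {n : ℕ} (K C : Set (Fin n → ℝ)) : ℝ :=
  sSup {ρ : ℝ | 0 ≤ ρ ∧ ∃ t : Fin n → ℝ, t +ᵥ ρ • C ⊆ K}

/-- Minkowski asymmetry `s(K) = R(-K, K)`. -/
noncomputable def asym {n : ℕ} (K : Set (Fin n → ℝ)) : ℝ := circR (-K) K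

/-- Diameter of `K` w.r.t. `C`: twice the maximal circumradius of a segment with endpoints in `K`. -/
noncomputable def diamC {n : ℕ} (K C : Set (Fin n → ℝ)) : ℝ :=
  sSup {d : ℝ | ∃ x ∈ K, ∃ y ∈ K, d = 2 * circR (segment ℝ x y) C}

/-- `K` is (diametrically) complete w.r.t. `C`. -/
def IsDiamComplete {n : ℕ} (K C : Set (Fin n → ℝ)) : Prop :=
  ∀ K' : Set (Fin n → ℝ), IsBody K' → K ⊂ K' → diamC K C < diamC K' C

/-- `S` is an `n`-simplex: convex hull of `n+1` affinely independent points. -/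
def IsSimplexBody {n : ℕ} (S : Set (Fin n → ℝ)) : Prop :=
  ∃ p : Fin (n + 1) → (Fin n → ℝ), AffineIndependent ℝ p ∧ S = convexHull ℝ (Set.range p)

/-- Support function of `C`. -/
noncomputable def supp {n : ℕ} (C : Set (Fin n → ℝ)) (a : Fin n → ℝ) : ℝ :=
  sSup {r : ℝ | ∃ x ∈ C, r = dotProduct a x}

/-- `A ⊆ₜ B`: `A` is contained in some translate of `B`. -/
def SubsetT {n : ℕ} (A B : Set (Fin n → ℝ)) : Prop := ∃ t : Fin n → ℝ, A ⊆ t +ᵥ B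

namespace Stmt8Aux

variable {n : ℕ} {K C : Set (Fin n → ℝ)}

def cSet (K C : Set (Fin n → ℝ)) : Set ℝ := {ρ : ℝ | 0 < ρ ∧ ∃ t : Fin n → ℝ, K ⊆ t +ᵥ ρ • C}
def iSet (K C : Set (Fin n → ℝ)) : Set ℝ := {ρ : ℝ | 0 ≤ ρ ∧ ∃ t : Fin n → ℝ, t +ᵥ ρ • C ⊆ K}
def dSet (K C : Set (Fin n → ℝ)) : Set ℝ :=
  {d : ℝ | ∃ x ∈ K, ∃ y ∈ K, d = 2 * circR (segment ℝ x y) C}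

lemma circR_def (K C : Set (Fin n → ℝ)) : circR K C = sInf (cSet K C) := rfl
lemma inrad_def (K C : Set (Fin n → ℝ)) : inrad K C = sSup (iSet K C) := rfl
lemma diamC_def (K C : Set (Fin n → ℝ)) : diamC K C = sSup (dSet K C) := rfl
lemma asym_def (C : Set (Fin n → ℝ)) : asym C = sInf (cSet (-C) C) := rfl

lemma cSet_bddBelow (K C : Set (Fin n → ℝ)) : BddBelow (cSet K C) :=
  ⟨0, fun _ h => h.1.le⟩

lemma circR_nonneg (K C : Set (Fin n → ℝ)) : 0 ≤ circR K C :=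
  Real.sInf_nonneg fun _ h => h.1.le

lemma dotCont (a : Fin n → ℝ) : Continuous fun x : Fin n → ℝ => dotProduct a x := by
  simp only [dotProduct]
  exact continuous_finset_sum _ fun i _ => continuous_const.mul (continuous_apply i)

lemma suppBdd (hC : IsCompact C) (a : Fin n → ℝ) :
    BddAbove {r : ℝ | ∃ x ∈ C, r = dotProduct a x} := by
  obtain ⟨b, hb⟩ := hC.bddAbove_image (dotCont a).continuousOn
  exact ⟨b, by rintro r ⟨x, hx, rfl⟩; exact hb (Set.mem_image_of_mem _ hx)⟩

lemma le_supp (hC : IsCompact C) {x : Fin n → ℝ} (hx : x ∈ C) (a : Fin n → ℝ) :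
    dotProduct a x ≤ supp C a :=
  le_csSup (suppBdd hC a) ⟨x, hx, rfl⟩

lemma supp_attain (hC : IsCompact C) (hne : C.Nonempty) (a : Fin n → ℝ) :
    ∃ c ∈ C, supp C a = dotProduct a c := by
  obtain ⟨c, hc, hmax⟩ := hC.exists_isMaxOn hne (dotCont a).continuousOn
  refine ⟨c, hc, IsGreatest.csSup_eq ⟨⟨c, hc, rfl⟩, ?_⟩⟩
  rintro r ⟨x, hx, rfl⟩
  exact hmax hx

lemma width_nonneg (hC : IsCompact C) (hne : C.Nonempty) (a : Fin n → ℝ) :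
    0 ≤ supp C a + supp C (-a) := by
  obtain ⟨c, hc⟩ := hne
  have h1 := le_supp hC hc a
  have h2 := le_supp hC hc (-a)
  rw [neg_dotProduct] at h2
  linarith

lemma dot_self_pos {a : Fin n → ℝ} (ha : a ≠ 0) : 0 < dotProduct a a := by
  have h0 : dotProduct a a ≠ 0 := fun h => ha (dotProduct_self_eq_zero.1 h)
  have hnn : 0 ≤ dotProduct a a := by
    simp only [dotProduct]
    exact Finset.sum_nonneg fun i _ => mul_self_nonneg _
  exact lt_of_le_of_ne hnn (Ne.symm h0)

lemma width_pos {c₀ : Fin n → ℝ} {ε : ℝ} (hCcomp : IsCompact C)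
    (hball : Metric.ball c₀ ε ⊆ C) (hε : 0 < ε) {a : Fin n → ℝ} (ha : a ≠ 0) :
    0 < supp C a + supp C (-a) := by
  have haa := dot_self_pos ha
  set δ := ε / (2 * (‖a‖ + 1)) with hδ
  have hden : (0:ℝ) < 2 * (‖a‖ + 1) := by positivity
  have hδ0 : 0 < δ := by positivity
  have hδε : δ * (2 * (‖a‖ + 1)) = ε := by rw [hδ]; field_simp
  have hna : δ * ‖a‖ < ε := by nlinarith [norm_nonneg a]
  have hmem1 : c₀ + δ • a ∈ C := by
    apply hball
    rw [Metric.mem_ball, dist_eq_norm, show c₀ + δ • a - c₀ = δ • a by abel, norm_smul,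
      Real.norm_eq_abs, abs_of_pos hδ0]
    exact hna
  have hmem2 : c₀ - δ • a ∈ C := by
    apply hball
    rw [Metric.mem_ball, dist_eq_norm, show c₀ - δ • a - c₀ = -(δ • a) by abel, norm_neg, norm_smul,
      Real.norm_eq_abs, abs_of_pos hδ0]
    exact hna
  have hA := le_supp hCcomp hmem1 a
  have hB := le_supp hCcomp hmem2 (-a)
  rw [dotProduct_add, dotProduct_smul, smul_eq_mul] at hA
  rw [neg_dotProduct, dotProduct_sub, dotProduct_smul, smul_eq_mul] at hB
  nlinarith [mul_pos hδ0 haa]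

lemma bigCover {A : Set (Fin n → ℝ)} {c₀ : Fin n → ℝ} {ε : ℝ} (hA : IsCompact A)
    (hball : Metric.ball c₀ ε ⊆ C) (hε : 0 < ε) :
    ∃ ρ : ℝ, 0 < ρ ∧ ∃ t : Fin n → ℝ, A ⊆ t +ᵥ ρ • C := by
  obtain ⟨M, hM⟩ := hA.isBounded.subset_closedBall 0
  have hM' : ∀ x ∈ A, ‖x‖ ≤ |M| := fun x hx => by
    have h := hM hx
    rw [Metric.mem_closedBall, dist_zero_right] at h
    exact h.trans (le_abs_self M)
  set ρ := (|M| + 1) / ε with hρ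
  have hρ0 : 0 < ρ := by positivity
  have hρε : ρ * ε = |M| + 1 := by rw [hρ]; field_simp
  refine ⟨ρ, hρ0, ρ • (-c₀), fun x hx => ?_⟩
  refine Set.mem_vadd_set.2 ⟨ρ • (ρ⁻¹ • x + c₀), Set.smul_mem_smul_set ?_, ?_⟩
  · apply hball
    rw [Metric.mem_ball, dist_eq_norm, show ρ⁻¹ • x + c₀ - c₀ = ρ⁻¹ • x by abel, norm_smul,
      Real.norm_eq_abs, abs_of_pos (inv_pos.2 hρ0)]
    have h1 : ‖x‖ < ρ * ε := by
      rw [hρε]; have := hM' x hx; have := abs_nonneg M; linarith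
    calc ρ⁻¹ * ‖x‖ < ρ⁻¹ * (ρ * ε) := mul_lt_mul_of_pos_left h1 (inv_pos.2 hρ0)
      _ = ε := by field_simp
  · rw [vadd_eq_add, smul_add, smul_inv_smul₀ (ne_of_gt hρ0), smul_neg]
    abel

lemma seg_elem {x y : Fin n → ℝ} {ρ : ℝ} (hCcomp : IsCompact C)
    (hρ : ρ ∈ cSet (segment ℝ x y) C) (a : Fin n → ℝ) :
    dotProduct a (x - y) ≤ ρ * (supp C a + supp C (-a)) := by
  obtain ⟨hρ0, t, hsub⟩ := hρ
  obtain ⟨px, hpx, hpxe⟩ := Set.mem_vadd_set.1 (hsub (left_mem_segment ℝ x y))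
  obtain ⟨cx, hcx, rfl⟩ := Set.mem_smul_set.1 hpx
  obtain ⟨py, hpy, hpye⟩ := Set.mem_vadd_set.1 (hsub (right_mem_segment ℝ x y))
  obtain ⟨cy, hcy, rfl⟩ := Set.mem_smul_set.1 hpy
  rw [vadd_eq_add] at hpxe hpye
  have h1 := le_supp hCcomp hcx a
  have h2 : -(dotProduct a cy) ≤ supp C (-a) := by
    have := le_supp hCcomp hcy (-a)
    rwa [neg_dotProduct] at this
  have hx' : x - y = ρ • cx - ρ • cy := by rw [← hpxe, ← hpye]; abel
  rw [hx', dotProduct_sub, dotProduct_smul, dotProduct_smul,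
    smul_eq_mul, smul_eq_mul]
  have h3 := mul_le_mul_of_nonneg_left h1 hρ0.le
  have h4 := mul_le_mul_of_nonneg_left h2 hρ0.le
  rw [mul_neg] at h4
  nlinarith

lemma dot_le_circR_seg {x y a : Fin n → ℝ} (hCcomp : IsCompact C) (hCne : C.Nonempty)
    (hsegne : (cSet (segment ℝ x y) C).Nonempty) :
    dotProduct a (x - y) ≤ circR (segment ℝ x y) C * (supp C a + supp C (-a)) := by
  rcases (width_nonneg hCcomp hCne a).eq_or_lt with hw | hw
  · obtain ⟨ρ, hρ⟩ := hsegne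
    have h := seg_elem hCcomp hρ a
    rw [← hw, mul_zero] at h ⊢
    exact h
  · have h1 : dotProduct a (x - y) / (supp C a + supp C (-a)) ≤
        circR (segment ℝ x y) C := by
      rw [circR_def]
      refine le_csInf hsegne fun ρ hρ => ?_
      rw [div_le_iff₀ hw]
      exact seg_elem hCcomp hρ a
    rwa [div_le_iff₀ hw] at h1

lemma two_circR_le_diam {x y : Fin n → ℝ} (hDbdd : BddAbove (dSet K C)) (hx : x ∈ K)
    (hy : y ∈ K) : 2 * circR (segment ℝ x y) C ≤ diamC K C :=
  le_csSup hDbdd ⟨x, hx, y, hy, rfl⟩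

lemma dSet_bddAbove {t₀ : Fin n → ℝ} {ρ₀ : ℝ} (hKconv : Convex ℝ K) (hρ₀ : 0 < ρ₀)
    (hcov : K ⊆ t₀ +ᵥ ρ₀ • C) : BddAbove (dSet K C) := by
  refine ⟨2 * ρ₀, ?_⟩
  rintro d ⟨x, hx, y, hy, rfl⟩
  have h1 : circR (segment ℝ x y) C ≤ ρ₀ :=
    csInf_le (cSet_bddBelow _ _) ⟨hρ₀, t₀, (hKconv.segment_subset hx hy).trans hcov⟩
  linarith

lemma key_ineq {t₀ z x : Fin n → ℝ} {ρ₀ r' : ℝ}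
    (hKconv : Convex ℝ K) (hCcomp : IsCompact C) (hCne : C.Nonempty)
    (hρ₀ : 0 < ρ₀) (hcov : K ⊆ t₀ +ᵥ ρ₀ • C) (hDbdd : BddAbove (dSet K C))
    (hin : z +ᵥ r' • C ⊆ K) (hx : x ∈ K) (a : Fin n → ℝ) :
    dotProduct a (x - z) ≤
      (diamC K C / 2) * supp C a + (diamC K C / 2 - r') * supp C (-a) := by
  obtain ⟨c₂, hc₂, hs2⟩ := supp_attain hCcomp hCne (-a)
  have hyK : z + r' • c₂ ∈ K :=
    hin (Set.mem_vadd_set.2 ⟨r' • c₂, Set.smul_mem_smul_set hc₂, rfl⟩)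
  have hsegne : (cSet (segment ℝ x (z + r' • c₂)) C).Nonempty :=
    ⟨ρ₀, hρ₀, t₀, (hKconv.segment_subset hx hyK).trans hcov⟩
  have h12 := dot_le_circR_seg (a := a) hCcomp hCne hsegne
  have h13 := two_circR_le_diam hDbdd hx hyK
  have hw := width_nonneg hCcomp hCne a
  have h12' : dotProduct a (x - (z + r' • c₂)) ≤
      (diamC K C / 2) * (supp C a + supp C (-a)) :=
    h12.trans (mul_le_mul_of_nonneg_right (by linarith) hw)
  have hxz : dotProduct a (x - z) =
      dotProduct a (x - (z + r' • c₂)) + r' * dotProduct a c₂ := by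
    rw [show x - z = (x - (z + r' • c₂)) + r' • c₂ by abel, dotProduct_add,
      dotProduct_smul, smul_eq_mul]
  have hc2' : dotProduct a c₂ = -supp C (-a) := by
    rw [hs2, neg_dotProduct, neg_neg]
  rw [hxz, hc2']
  linarith

lemma dot_repr (f : (Fin n → ℝ) →L[ℝ] ℝ) :
    ∃ a : Fin n → ℝ, ∀ y, f y = dotProduct a y := by
  refine ⟨fun i => f (Pi.single i 1), fun y => ?_⟩
  have hy : y = ∑ i : Fin n, y i • (Pi.single i 1 : Fin n → ℝ) := by
    funext j
    rw [Finset.sum_apply]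
    simp [Pi.single_apply, mul_ite]
  conv_lhs => rw [hy]
  rw [map_sum]
  simp only [map_smul, smul_eq_mul]
  simp only [dotProduct]
  exact Finset.sum_congr rfl fun i _ => mul_comm _ _

lemma mem_of_forall_dot_le {A : Set (Fin n → ℝ)} {v : Fin n → ℝ} (hconv : Convex ℝ A)
    (hcomp : IsCompact A)
    (h : ∀ a : Fin n → ℝ, ∃ b ∈ A, dotProduct a v ≤ dotProduct a b) : v ∈ A := by
  by_contra hv
  obtain ⟨f, u0, hfA, hfv⟩ := geometric_hahn_banach_closed_point hconv hcomp.isClosed hv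
  obtain ⟨a, ha⟩ := dot_repr f
  obtain ⟨b, hbA, hle⟩ := h a
  have h1 := hfA b hbA
  rw [ha b] at h1
  rw [ha v] at hfv
  linarith

lemma cover_mem {t₀ z u : Fin n → ℝ} {ρ₀ r' s' : ℝ}
    (hKconv : Convex ℝ K) (hCconv : Convex ℝ C) (hCcomp : IsCompact C) (hCne : C.Nonempty)
    (hρ₀ : 0 < ρ₀) (hcov : K ⊆ t₀ +ᵥ ρ₀ • C) (hDbdd : BddAbove (dSet K C))
    (hin : z +ᵥ r' • C ⊆ K) (hr'D : r' ≤ diamC K C / 2) (hD0 : 0 < diamC K C)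
    (hs'0 : 0 < s') (hu : -C ⊆ u +ᵥ s' • C) :
    diamC K C / 2 + s' * (diamC K C / 2 - r') ∈ cSet K C := by
  constructor
  · have h := mul_nonneg hs'0.le (by linarith : (0:ℝ) ≤ diamC K C / 2 - r')
    linarith
  refine ⟨z + (diamC K C / 2 - r') • u, fun x hx => ?_⟩
  have hmemA : x - z ∈ (diamC K C / 2) • C + (diamC K C / 2 - r') • (-C) := by
    have hconvA : Convex ℝ ((diamC K C / 2) • C + (diamC K C / 2 - r') • (-C)) :=
      (hCconv.smul _).add (hCconv.neg.smul _)
    have hcompA : IsCompact ((diamC K C / 2) • C + (diamC K C / 2 - r') • (-C)) := by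
      have h1 : IsCompact ((diamC K C / 2) • C) := by
        rw [← Set.image_smul]; exact hCcomp.image (continuous_const_smul _)
      have h2 : IsCompact ((diamC K C / 2 - r') • (-C)) := by
        rw [← Set.image_smul]; exact hCcomp.neg.image (continuous_const_smul _)
      exact h1.add h2
    refine mem_of_forall_dot_le hconvA hcompA fun a => ?_
    obtain ⟨cc₁, hcc₁, hss1⟩ := supp_attain hCcomp hCne a
    obtain ⟨cc₂, hcc₂, hss2⟩ := supp_attain hCcomp hCne (-a)
    refine ⟨(diamC K C / 2) • cc₁ + (diamC K C / 2 - r') • (-cc₂),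
      Set.add_mem_add (Set.smul_mem_smul_set hcc₁)
        (Set.smul_mem_smul_set (Set.neg_mem_neg.2 hcc₂)), ?_⟩
    have hkey := key_ineq hKconv hCcomp hCne hρ₀ hcov hDbdd hin hx a
    have hb : dotProduct a ((diamC K C / 2) • cc₁ + (diamC K C / 2 - r') • (-cc₂)) =
        (diamC K C / 2) * supp C a + (diamC K C / 2 - r') * supp C (-a) := by
      rw [dotProduct_add, dotProduct_smul, dotProduct_smul, smul_eq_mul,
        smul_eq_mul, dotProduct_neg, ← hss1]
      have h2 : dotProduct a cc₂ = -supp C (-a) := by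
        rw [hss2, neg_dotProduct, neg_neg]
      rw [h2]; ring
    rw [hb]; exact hkey
  obtain ⟨p, hp, q, hq, hpq⟩ := Set.mem_add.1 hmemA
  obtain ⟨cc₁, hcc₁, rfl⟩ := Set.mem_smul_set.1 hp
  obtain ⟨m, hm, rfl⟩ := Set.mem_smul_set.1 hq
  obtain ⟨q', hq', hq'e⟩ := Set.mem_vadd_set.1 (hu hm)
  obtain ⟨c₃, hc₃, rfl⟩ := Set.mem_smul_set.1 hq'
  refine Set.mem_vadd_set.2 ⟨(diamC K C / 2) • cc₁ + (s' * (diamC K C / 2 - r')) • c₃, ?_, ?_⟩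
  · rw [hCconv.add_smul (by linarith : (0:ℝ) ≤ diamC K C / 2)
      (mul_nonneg hs'0.le (by linarith : (0:ℝ) ≤ diamC K C / 2 - r'))]
    exact Set.add_mem_add (Set.smul_mem_smul_set hcc₁) (Set.smul_mem_smul_set hc₃)
  · rw [vadd_eq_add] at hq'e ⊢
    have hx2 : x = z + ((diamC K C / 2) • cc₁ + (diamC K C / 2 - r') • m) := by
      rw [hpq]; abel
    rw [hx2, ← hq'e, smul_add, smul_smul,
      show (diamC K C / 2 - r') * s' = s' * (diamC K C / 2 - r') from mul_comm _ _]
    abel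

lemma single_ne (hn : n ≠ 0) :
    (Pi.single (⟨0, Nat.pos_of_ne_zero hn⟩ : Fin n) 1 : Fin n → ℝ) ≠ 0 := fun h => by
  simpa [Pi.single_eq_same] using congrFun h ⟨0, Nat.pos_of_ne_zero hn⟩

lemma single_norm_le (hn : n ≠ 0) :
    ‖(Pi.single (⟨0, Nat.pos_of_ne_zero hn⟩ : Fin n) 1 : Fin n → ℝ)‖ ≤ 1 := by
  refine (pi_norm_le_iff_of_nonneg zero_le_one).2 fun i => ?_
  by_cases h : i = ⟨0, Nat.pos_of_ne_zero hn⟩ <;> simp [Pi.single_apply, h]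

lemma single_norm_ge (hn : n ≠ 0) :
    1 ≤ ‖(Pi.single (⟨0, Nat.pos_of_ne_zero hn⟩ : Fin n) 1 : Fin n → ℝ)‖ := by
  have := norm_le_pi_norm ((Pi.single (⟨0, Nat.pos_of_ne_zero hn⟩ : Fin n) 1 : Fin n → ℝ))
    ⟨0, Nat.pos_of_ne_zero hn⟩
  simpa [Pi.single_eq_same] using this

lemma inrad_elem_le_halfDiam {c₀ t₀ z : Fin n → ℝ} {ε ρ₀ r' : ℝ} (hn : n ≠ 0)
    (hKconv : Convex ℝ K) (hCcomp : IsCompact C) (hCball : Metric.ball c₀ ε ⊆ C) (hε : 0 < ε)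
    (hρ₀ : 0 < ρ₀) (hcov : K ⊆ t₀ +ᵥ ρ₀ • C) (hDbdd : BddAbove (dSet K C))
    (hin : z +ᵥ r' • C ⊆ K) : r' ≤ diamC K C / 2 := by
  have hCne : C.Nonempty := ⟨c₀, hCball (Metric.mem_ball_self hε)⟩
  set a : Fin n → ℝ := Pi.single (⟨0, Nat.pos_of_ne_zero hn⟩ : Fin n) 1 with hadef
  have ha : a ≠ 0 := single_ne hn
  obtain ⟨c₁, hc₁, hs1⟩ := supp_attain hCcomp hCne a
  obtain ⟨c₂, hc₂, hs2⟩ := supp_attain hCcomp hCne (-a)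
  have hx : z + r' • c₁ ∈ K :=
    hin (Set.mem_vadd_set.2 ⟨r' • c₁, Set.smul_mem_smul_set hc₁, rfl⟩)
  have hy : z + r' • c₂ ∈ K :=
    hin (Set.mem_vadd_set.2 ⟨r' • c₂, Set.smul_mem_smul_set hc₂, rfl⟩)
  have hsegne : (cSet (segment ℝ (z + r' • c₁) (z + r' • c₂)) C).Nonempty :=
    ⟨ρ₀, hρ₀, t₀, (hKconv.segment_subset hx hy).trans hcov⟩
  have h12 := dot_le_circR_seg (a := a) hCcomp hCne hsegne
  have h13 := two_circR_le_diam hDbdd hx hy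
  have hwpos := width_pos hCcomp hCball hε ha
  have hdot : dotProduct a ((z + r' • c₁) - (z + r' • c₂)) =
      r' * (supp C a + supp C (-a)) := by
    rw [show (z + r' • c₁) - (z + r' • c₂) = r' • (c₁ - c₂) by rw [smul_sub]; abel,
      dotProduct_smul, smul_eq_mul, dotProduct_sub, ← hs1]
    have h2 : dotProduct a c₂ = -supp C (-a) := by
      rw [hs2, neg_dotProduct, neg_neg]
    rw [h2]; ring
  rw [hdot] at h12
  have hcirc : r' ≤ circR (segment ℝ (z + r' • c₁) (z + r' • c₂)) C :=
    le_of_mul_le_mul_right (by linarith) hwpos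
  linarith

lemma diam_pos {c₀ t₀ k₀ : Fin n → ℝ} {ε ρ₀ εK : ℝ} (hn : n ≠ 0)
    (hKconv : Convex ℝ K) (hCcomp : IsCompact C) (hCball : Metric.ball c₀ ε ⊆ C) (hε : 0 < ε)
    (hρ₀ : 0 < ρ₀) (hcov : K ⊆ t₀ +ᵥ ρ₀ • C) (hDbdd : BddAbove (dSet K C))
    (hKball : Metric.ball k₀ εK ⊆ K) (hεK : 0 < εK) : 0 < diamC K C := by
  have hCne : C.Nonempty := ⟨c₀, hCball (Metric.mem_ball_self hε)⟩
  set a : Fin n → ℝ := Pi.single (⟨0, Nat.pos_of_ne_zero hn⟩ : Fin n) 1 with hadef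
  have ha : a ≠ 0 := single_ne hn
  have hk₀ : k₀ ∈ K := hKball (Metric.mem_ball_self hεK)
  have hyK : k₀ + (εK / 2) • a ∈ K := by
    apply hKball
    rw [Metric.mem_ball, dist_eq_norm, show k₀ + (εK / 2) • a - k₀ = (εK / 2) • a by abel,
      norm_smul, Real.norm_eq_abs, abs_of_pos (by positivity : (0:ℝ) < εK / 2)]
    have hle : ‖a‖ ≤ 1 := by rw [hadef]; exact single_norm_le hn
    nlinarith [norm_nonneg a]
  have hsegne : (cSet (segment ℝ (k₀ + (εK / 2) • a) k₀) C).Nonempty :=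
    ⟨ρ₀, hρ₀, t₀, (hKconv.segment_subset hyK hk₀).trans hcov⟩
  have h12 := dot_le_circR_seg (a := a) hCcomp hCne hsegne
  have hwpos := width_pos hCcomp hCball hε ha
  have haa := dot_self_pos ha
  have hdot : dotProduct a ((k₀ + (εK / 2) • a) - k₀) =
      (εK / 2) * dotProduct a a := by
    rw [show (k₀ + (εK / 2) • a) - k₀ = (εK / 2) • a by abel, dotProduct_smul, smul_eq_mul]
  rw [hdot] at h12
  have hc0 : 0 < circR (segment ℝ (k₀ + (εK / 2) • a) k₀) C := by
    by_contra h
    push_neg at h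
    have h5 := mul_le_mul_of_nonneg_right h hwpos.le
    rw [zero_mul] at h5
    nlinarith
  have h13 := two_circR_le_diam hDbdd hyK hk₀
  linarith

lemma iSet_bddAbove {C' : Set (Fin n → ℝ)} {c₀ : Fin n → ℝ} {ε : ℝ} (hn : n ≠ 0)
    (hKcomp : IsCompact K) (hball : Metric.ball c₀ ε ⊆ C') (hε : 0 < ε) :
    BddAbove (iSet K C') := by
  obtain ⟨M, hM⟩ := hKcomp.isBounded.subset_closedBall 0
  set e : Fin n → ℝ := Pi.single (⟨0, Nat.pos_of_ne_zero hn⟩ : Fin n) 1 with hedef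
  refine ⟨2 * |M| / ε, ?_⟩
  rintro ρ ⟨hρ0, t, hsub⟩
  have hmem : ∀ v : Fin n → ℝ, v ∈ Metric.ball c₀ ε → t + ρ • v ∈ K := fun v hv =>
    hsub (Set.mem_vadd_set.2 ⟨ρ • v, Set.smul_mem_smul_set (hball hv), rfl⟩)
  have hb1 : c₀ + (ε / 2) • e ∈ Metric.ball c₀ ε := by
    rw [Metric.mem_ball, dist_eq_norm, show c₀ + (ε / 2) • e - c₀ = (ε / 2) • e by abel,
      norm_smul, Real.norm_eq_abs, abs_of_pos (by positivity : (0:ℝ) < ε / 2)]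
    have hle : ‖e‖ ≤ 1 := by rw [hedef]; exact single_norm_le hn
    nlinarith [norm_nonneg e]
  have hb2 : c₀ - (ε / 2) • e ∈ Metric.ball c₀ ε := by
    rw [Metric.mem_ball, dist_eq_norm, show c₀ - (ε / 2) • e - c₀ = -((ε / 2) • e) by abel,
      norm_neg, norm_smul, Real.norm_eq_abs, abs_of_pos (by positivity : (0:ℝ) < ε / 2)]
    have hle : ‖e‖ ≤ 1 := by rw [hedef]; exact single_norm_le hn
    nlinarith [norm_nonneg e]
  have h1 := hM (hmem _ hb1)
  have h2 := hM (hmem _ hb2)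
  rw [Metric.mem_closedBall, dist_zero_right] at h1 h2
  have hdiff : (t + ρ • (c₀ + (ε / 2) • e)) - (t + ρ • (c₀ - (ε / 2) • e)) = (ρ * ε) • e := by
    rw [smul_add, smul_sub, smul_smul,
      show (ρ * ε) • e = (ρ * (ε / 2)) • e + (ρ * (ε / 2)) • e by rw [← add_smul]; ring_nf]
    abel
  have h3 : ‖(ρ * ε) • e‖ ≤ 2 * |M| := by
    rw [← hdiff]
    have h4 := norm_sub_le (t + ρ • (c₀ + (ε / 2) • e)) (t + ρ • (c₀ - (ε / 2) • e))
    have h5 := le_abs_self M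
    linarith
  rw [norm_smul, Real.norm_eq_abs, abs_of_nonneg (by positivity : (0:ℝ) ≤ ρ * ε)] at h3
  rw [le_div_iff₀ hε]
  have hge : 1 ≤ ‖e‖ := by rw [hedef]; exact single_norm_ge hn
  nlinarith [mul_le_mul_of_nonneg_left hge (by positivity : (0:ℝ) ≤ ρ * ε)]

lemma asym_elem_ge_one {c₀ u : Fin n → ℝ} {ε s' : ℝ} (hn : n ≠ 0) (hCcomp : IsCompact C)
    (hCball : Metric.ball c₀ ε ⊆ C) (hε : 0 < ε)
    (hs'0 : 0 < s') (hu : -C ⊆ u +ᵥ s' • C) : 1 ≤ s' := by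
  have hCne : C.Nonempty := ⟨c₀, hCball (Metric.mem_ball_self hε)⟩
  have haux : ∀ b : Fin n → ℝ, supp C (-b) ≤ dotProduct b u + s' * supp C b := by
    intro b
    have hne : {r : ℝ | ∃ x ∈ C, r = dotProduct (-b) x}.Nonempty :=
      ⟨_, hCne.choose, hCne.choose_spec, rfl⟩
    refine csSup_le hne ?_
    rintro r ⟨x, hx, rfl⟩
    obtain ⟨p, hp, hpe⟩ := Set.mem_vadd_set.1 (hu (Set.neg_mem_neg.2 hx))
    obtain ⟨c, hc, rfl⟩ := Set.mem_smul_set.1 hp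
    rw [vadd_eq_add] at hpe
    have hxe : x = -(u + s' • c) := by rw [hpe]; exact (neg_neg x).symm
    have h1 : dotProduct (-b) x = dotProduct b u + s' * dotProduct b c := by
      rw [neg_dotProduct, hxe, dotProduct_neg, neg_neg, dotProduct_add,
        dotProduct_smul, smul_eq_mul]
    rw [h1]
    have h2 := le_supp hCcomp hc b
    nlinarith
  set a : Fin n → ℝ := Pi.single (⟨0, Nat.pos_of_ne_zero hn⟩ : Fin n) 1 with hadef
  have ha : a ≠ 0 := single_ne hn
  have h1 := haux a
  have h2 := haux (-a)
  rw [neg_neg, neg_dotProduct] at h2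
  have hw := width_pos hCcomp hCball hε ha
  nlinarith

end Stmt8Aux

open Stmt8Aux in
theorem stmt8 {n : ℕ} (K C : Set (Fin n → ℝ)) (hK : IsBody K) (hC : IsBody C) :
    (1 + asym K) * inrad K (-C) ≤ inrad K (-C) + circR K C ∧
    inrad K (-C) + circR K C ≤ asym C * inrad K C + circR K C ∧
    asym C * inrad K C + circR K C ≤ (1 / 2) * (1 + asym C) * diamC K C := by
  obtain ⟨hKconv, hKcomp, hKint⟩ := hK
  obtain ⟨hCconv, hCcomp, hCint⟩ := hC
  obtain ⟨k₁, hk₁⟩ := hKint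
  obtain ⟨εK, hεK0, hKball'⟩ := Metric.isOpen_iff.1 isOpen_interior k₁ hk₁
  have hKball : Metric.ball k₁ εK ⊆ K := hKball'.trans interior_subset
  obtain ⟨c₁, hc₁⟩ := hCint
  obtain ⟨εC, hεC0, hCball'⟩ := Metric.isOpen_iff.1 isOpen_interior c₁ hc₁
  have hCball : Metric.ball c₁ εC ⊆ C := hCball'.trans interior_subset
  have hKne : K.Nonempty := ⟨k₁, hKball (Metric.mem_ball_self hεK0)⟩
  have hCne : C.Nonempty := ⟨c₁, hCball (Metric.mem_ball_self hεC0)⟩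
  by_cases hn : n = 0
  · subst hn
    have hss : ∀ x y : Fin 0 → ℝ, x = y := fun x y => funext fun i => i.elim0
    obtain ⟨k₀, hk₀⟩ := hKne
    obtain ⟨c₀, hc₀⟩ := hCne
    have hcirc : ∀ A B : Set (Fin 0 → ℝ), B.Nonempty → circR A B = 0 := by
      intro A B hB
      obtain ⟨b₀, hb₀⟩ := hB
      have hset : {ρ : ℝ | 0 < ρ ∧ ∃ t : Fin 0 → ℝ, A ⊆ t +ᵥ ρ • B} = Set.Ioi 0 := by
        ext ρ
        simp only [Set.mem_setOf_eq, Set.mem_Ioi]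
        refine ⟨fun h => h.1, fun h => ⟨h, 0, fun x hx => ?_⟩⟩
        exact Set.mem_vadd_set.2 ⟨ρ • b₀, Set.smul_mem_smul_set hb₀, hss _ _⟩
      show sInf _ = 0
      rw [hset]
      exact csInf_Ioi
    have hinr : ∀ C' : Set (Fin 0 → ℝ), inrad K C' = 0 := by
      intro C'
      apply Real.sSup_of_not_bddAbove
      rintro ⟨b, hb⟩
      have hmem : ∀ ρ : ℝ, 0 ≤ ρ → ρ ∈ {ρ : ℝ | 0 ≤ ρ ∧ ∃ t : Fin 0 → ℝ, t +ᵥ ρ • C' ⊆ K} :=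
        fun ρ hρ => ⟨hρ, 0, fun x _ => by rw [hss x k₀]; exact hk₀⟩
      have h1 := hb (hmem (|b| + 1) (by positivity))
      have h2 := le_abs_self b
      linarith
    have hdiam : diamC K C = 0 := by
      have hset : {d : ℝ | ∃ x ∈ K, ∃ y ∈ K, d = 2 * circR (segment ℝ x y) C} = {0} := by
        ext d
        simp only [Set.mem_setOf_eq, Set.mem_singleton_iff]
        constructor
        · rintro ⟨x, hx, y, hy, rfl⟩
          rw [hcirc _ _ ⟨c₀, hc₀⟩]
          ring
        · rintro rfl
          exact ⟨k₀, hk₀, k₀, hk₀, by rw [hcirc _ _ ⟨c₀, hc₀⟩]; ring⟩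
      show sSup _ = 0
      rw [hset]
      exact csSup_singleton 0
    have e1 : asym K = 0 := hcirc (-K) K ⟨k₀, hk₀⟩
    have e2 : asym C = 0 := hcirc (-C) C ⟨c₀, hc₀⟩
    have e3 : circR K C = 0 := hcirc K C ⟨c₀, hc₀⟩
    rw [e1, e2, e3, hinr, hinr, hdiam]
    norm_num
  -- main case n ≠ 0
  obtain ⟨ρ₀, hρ₀, t₀, hcov⟩ := bigCover hKcomp hCball hεC0
  have hDbdd : BddAbove (dSet K C) := dSet_bddAbove hKconv hρ₀ hcov
  have hcne : (cSet K C).Nonempty := ⟨ρ₀, hρ₀, t₀, hcov⟩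
  have hR0 : 0 ≤ circR K C := circR_nonneg K C
  have hCnegball : Metric.ball (-c₁) εC ⊆ -C := by
    intro x hx
    rw [Set.mem_neg]
    apply hCball
    rw [Metric.mem_ball, dist_eq_norm] at hx ⊢
    rw [show -x - c₁ = -(x - -c₁) by abel, norm_neg]
    exact hx
  obtain ⟨s₀, hs₀, u₀, hu₀⟩ := bigCover hCcomp.neg hCball hεC0
  have hasymNe : (cSet (-C) C).Nonempty := ⟨s₀, hs₀, u₀, hu₀⟩
  have hsC1 : 1 ≤ asym C := by
    rw [asym_def]
    refine le_csInf hasymNe fun s' hs' => ?_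
    obtain ⟨hs'0, u, hu⟩ := hs'
    exact asym_elem_ge_one hn hCcomp hCball hεC0 hs'0 hu
  have hsC0 : (0:ℝ) < asym C := lt_of_lt_of_le one_pos hsC1
  have hsK0 : 0 ≤ asym K := circR_nonneg (-K) K
  have hiNeC : (iSet K C).Nonempty := by
    refine ⟨0, le_rfl, k₁, fun x hx => ?_⟩
    obtain ⟨y, hy, hxy⟩ := Set.mem_vadd_set.1 hx
    obtain ⟨w, _, hws⟩ := Set.mem_smul_set.1 hy
    rw [← hxy, ← hws, zero_smul, vadd_eq_add, add_zero]
    exact hKball (Metric.mem_ball_self hεK0)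
  have hiNeC' : (iSet K (-C)).Nonempty := by
    refine ⟨0, le_rfl, k₁, fun x hx => ?_⟩
    obtain ⟨y, hy, hxy⟩ := Set.mem_vadd_set.1 hx
    obtain ⟨w, _, hws⟩ := Set.mem_smul_set.1 hy
    rw [← hxy, ← hws, zero_smul, vadd_eq_add, add_zero]
    exact hKball (Metric.mem_ball_self hεK0)
  have hiBddC : BddAbove (iSet K C) := iSet_bddAbove hn hKcomp hCball hεC0
  have hiBddC' : BddAbove (iSet K (-C)) := iSet_bddAbove hn hKcomp hCnegball hεC0
  have hrC0 : 0 ≤ inrad K C := Real.sSup_nonneg fun ρ h => h.1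
  have hrC'0 : 0 ≤ inrad K (-C) := Real.sSup_nonneg fun ρ h => h.1
  have hD0 : 0 < diamC K C :=
    diam_pos hn hKconv hCcomp hCball hεC0 hρ₀ hcov hDbdd hKball hεK0
  -- Goal 1 : asym K * inrad K (-C) ≤ circR K C
  have hG1 : asym K * inrad K (-C) ≤ circR K C := by
    have h1 : ∀ ρ ∈ iSet K (-C), asym K * ρ ≤ circR K C := by
      rintro ρ ⟨hρ0, t, hsub⟩
      rcases eq_or_lt_of_le hρ0 with h0 | h0
      · rw [← h0, mul_zero]
        exact hR0
      rw [circR_def]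
      refine le_csInf hcne ?_
      rintro R' ⟨hR'0, v, hvsub⟩
      have hmem : R' / ρ ∈ cSet (-K) K := by
        refine ⟨div_pos hR'0 h0, -v - (R' / ρ) • t, ?_⟩
        intro x hx
        have hxK : -x ∈ K := Set.mem_neg.1 hx
        obtain ⟨p, hp, hpe⟩ := Set.mem_vadd_set.1 (hvsub hxK)
        obtain ⟨c, hc, rfl⟩ := Set.mem_smul_set.1 hp
        rw [vadd_eq_add] at hpe
        have hkK : t + ρ • (-c) ∈ K :=
          hsub (Set.mem_vadd_set.2 ⟨ρ • (-c), Set.smul_mem_smul_set (Set.neg_mem_neg.2 hc), rfl⟩)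
        refine Set.mem_vadd_set.2 ⟨(R' / ρ) • (t + ρ • (-c)), Set.smul_mem_smul_set hkK, ?_⟩
        rw [vadd_eq_add]
        have hx2 : x = -(v + R' • c) := by rw [hpe]; exact (neg_neg x).symm
        rw [hx2, smul_add, smul_smul, div_mul_cancel₀ _ (ne_of_gt h0), smul_neg]
        abel
      have hle : asym K ≤ R' / ρ := csInf_le (cSet_bddBelow _ _) hmem
      calc asym K * ρ ≤ (R' / ρ) * ρ := mul_le_mul_of_nonneg_right hle h0.le
        _ = R' := div_mul_cancel₀ _ (ne_of_gt h0)
    rcases le_or_gt (asym K) 0 with hK0 | hK0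
    · have h := mul_nonneg (neg_nonneg.2 hK0) hrC'0
      nlinarith
    · have h2 : inrad K (-C) ≤ circR K C / asym K := by
        rw [inrad_def]
        refine csSup_le hiNeC' fun ρ hρ => ?_
        rw [le_div_iff₀ hK0]
        have := h1 ρ hρ
        nlinarith
      rw [le_div_iff₀ hK0] at h2
      nlinarith
  -- Goal 2 : inrad K (-C) ≤ asym C * inrad K C
  have hG2 : inrad K (-C) ≤ asym C * inrad K C := by
    rw [inrad_def]
    refine csSup_le hiNeC' ?_
    rintro ρ ⟨hρ0, t, hsub⟩
    refine le_of_forall_pos_le_add fun ε hε => ?_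
    have hδ0 : 0 < ε / (inrad K C + 1) := by positivity
    obtain ⟨s', hs'mem, hs'lt⟩ := Real.lt_sInf_add_pos hasymNe hδ0
    obtain ⟨hs'0, u, hu⟩ := hs'mem
    rw [← asym_def] at hs'lt
    have hmem : ρ / s' ∈ iSet K C := by
      refine ⟨div_nonneg hρ0 hs'0.le, t + (ρ / s') • u, ?_⟩
      intro x hx
      obtain ⟨p, hp, hpe⟩ := Set.mem_vadd_set.1 hx
      obtain ⟨c, hc, rfl⟩ := Set.mem_smul_set.1 hp
      rw [vadd_eq_add] at hpe
      have hnc : -c ∈ -C := Set.neg_mem_neg.2 hc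
      obtain ⟨q, hq, hqe⟩ := Set.mem_vadd_set.1 (hu hnc)
      obtain ⟨c', hc', rfl⟩ := Set.mem_smul_set.1 hq
      rw [vadd_eq_add] at hqe
      have hm : -c' ∈ -C := Set.neg_mem_neg.2 hc'
      apply hsub
      refine Set.mem_vadd_set.2 ⟨ρ • (-c'), Set.smul_mem_smul_set hm, ?_⟩
      rw [vadd_eq_add, ← hpe]
      have hc4 : c = -(u + s' • c') := by rw [hqe]; exact (neg_neg c).symm
      have hc4' : (ρ / s') • c = -((ρ / s') • u) - ρ • c' := by
        rw [hc4, smul_neg, smul_add, smul_smul, div_mul_cancel₀ _ (ne_of_gt hs'0)]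
        abel
      rw [hc4', smul_neg]
      abel
    have hle : ρ / s' ≤ inrad K C := by
      rw [inrad_def]
      exact le_csSup hiBddC hmem
    have h5 : ρ ≤ s' * inrad K C := by
      rw [div_le_iff₀ hs'0] at hle
      nlinarith
    have h6 : s' * inrad K C ≤ (asym C + ε / (inrad K C + 1)) * inrad K C :=
      mul_le_mul_of_nonneg_right hs'lt.le hrC0
    have h7 : (ε / (inrad K C + 1)) * inrad K C ≤ ε := by
      rw [div_mul_eq_mul_div, div_le_iff₀ (by positivity : (0:ℝ) < inrad K C + 1)]
      nlinarith
    nlinarith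
  -- Goal 3
  have hG3 : asym C * inrad K C + circR K C ≤ (1 + asym C) * (diamC K C / 2) := by
    have h4 : ∀ r' ∈ iSet K C,
        asym C * r' + circR K C ≤ (1 + asym C) * (diamC K C / 2) := by
      rintro r' ⟨hr'0, z, hz⟩
      have hr'D : r' ≤ diamC K C / 2 :=
        inrad_elem_le_halfDiam hn hKconv hCcomp hCball hεC0 hρ₀ hcov hDbdd hz
      refine le_of_forall_pos_le_add fun ε hε => ?_
      have hden : (0:ℝ) < diamC K C / 2 - r' + 1 := by linarith
      have hδ0 : 0 < ε / (diamC K C / 2 - r' + 1) := div_pos hε hden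
      obtain ⟨s', hs'mem, hs'lt⟩ := Real.lt_sInf_add_pos hasymNe hδ0
      obtain ⟨hs'0, u, hu⟩ := hs'mem
      rw [← asym_def] at hs'lt
      have hmem := cover_mem hKconv hCconv hCcomp hCne hρ₀ hcov hDbdd hz hr'D hD0 hs'0 hu
      have hRle : circR K C ≤ diamC K C / 2 + s' * (diamC K C / 2 - r') := by
        rw [circR_def]
        exact csInf_le (cSet_bddBelow _ _) hmem
      have hcoef : (0:ℝ) ≤ diamC K C / 2 - r' := by linarith
      have hA1 : s' * (diamC K C / 2 - r') ≤
          (asym C + ε / (diamC K C / 2 - r' + 1)) * (diamC K C / 2 - r') :=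
        mul_le_mul_of_nonneg_right hs'lt.le hcoef
      have hA2 : (ε / (diamC K C / 2 - r' + 1)) * (diamC K C / 2 - r') ≤ ε := by
        rw [div_mul_eq_mul_div, div_le_iff₀ hden]
        nlinarith
      nlinarith
    have h8 : inrad K C ≤ ((1 + asym C) * (diamC K C / 2) - circR K C) / asym C := by
      rw [inrad_def]
      refine csSup_le hiNeC fun r' hr' => ?_
      rw [le_div_iff₀ hsC0]
      have := h4 r' hr'
      nlinarith
    rw [le_div_iff₀ hsC0] at h8
    nlinarith
  refine ⟨by nlinarith, by linarith, by nlinarith⟩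
end

section
/- For all convex bodies K, C in R^n, the chain (1+s(K))·r(K,−C) ≤ r(K,−C) + R(K,C) ≤ ((1+s(K))/s(K))·R(K,C) ≤ (1/2)(1+s(C))·D(K,C) holds. -/
open Pointwise

variable {n : ℕ}

variable {n : ℕ}

lemma mem_tr {t x : Fin n → ℝ} {ρ : ℝ} {S : Set (Fin n → ℝ)} :
    x ∈ t +ᵥ ρ • S ↔ ∃ c ∈ S, x = t + ρ • c := by
  constructor
  · rintro ⟨y, ⟨c, hc, rfl⟩, rfl⟩
    exact ⟨c, hc, rfl⟩
  · rintro ⟨c, hc, rfl⟩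
    exact ⟨ρ • c, ⟨c, hc, rfl⟩, rfl⟩

lemma circ_ne (A B : Set (Fin n → ℝ)) (hA : IsCompact A)
    (hB : (interior B).Nonempty) :
    ∃ ρ : ℝ, 0 < ρ ∧ ∃ t : Fin n → ℝ, A ⊆ t +ᵥ ρ • B := by
  obtain ⟨c, hc⟩ := hB
  obtain ⟨ε, hε, hball⟩ := Metric.isOpen_iff.1 isOpen_interior c hc
  obtain ⟨M, hM⟩ := hA.isBounded.exists_norm_le
  set ρ : ℝ := (|M| + 1) / ε with hρdef
  have hρ : 0 < ρ := by positivity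
  refine ⟨ρ, hρ, -(ρ • c), fun x hx => ?_⟩
  rw [mem_tr]
  refine ⟨c + ρ⁻¹ • x, interior_subset (hball ?_), by
    rw [smul_add, smul_inv_smul₀ hρ.ne']; abel⟩
  rw [Metric.mem_ball, dist_eq_norm, add_sub_cancel_left, norm_smul,
    norm_inv, Real.norm_eq_abs, abs_of_pos hρ]
  have h1 : ‖x‖ ≤ M := hM x hx
  have h2 : M ≤ |M| := le_abs_self M
  rw [hρdef]
  rw [inv_div, div_mul_eq_mul_div, div_lt_iff₀ (by positivity)]
  nlinarith [abs_nonneg M, norm_nonneg x]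

lemma circ_bddBelow (K C : Set (Fin n → ℝ)) :
    BddBelow {ρ : ℝ | 0 < ρ ∧ ∃ t : Fin n → ℝ, K ⊆ t +ᵥ ρ • C} :=
  ⟨0, fun _ hx => hx.1.le⟩

lemma circR_nonneg (K C : Set (Fin n → ℝ)) : 0 ≤ circR K C :=
  Real.sInf_nonneg fun _ hx => hx.1.le

lemma asym_nonneg (K : Set (Fin n → ℝ)) : 0 ≤ asym K := circR_nonneg _ _

lemma circR_le {K C : Set (Fin n → ℝ)} {ρ : ℝ} (h0 : 0 < ρ)
    (h : ∃ t : Fin n → ℝ, K ⊆ t +ᵥ ρ • C) : circR K C ≤ ρ :=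
  csInf_le (circ_bddBelow K C) ⟨h0, h⟩

lemma fact1 (K C : Set (Fin n → ℝ)) (hK : IsBody K) (hC : IsBody C) :
    asym K * inrad K (-C) ≤ circR K C := by
  have hRne := circ_ne K C hK.2.1 hC.2.2
  have hR0 := circR_nonneg K C
  -- key: for ρ in the inradius set, asym K * ρ ≤ circR K C
  have key : ∀ ρ : ℝ, 0 ≤ ρ → (∃ t : Fin n → ℝ, t +ᵥ ρ • (-C) ⊆ K) →
      asym K * ρ ≤ circR K C := by
    intro ρ hρ0 ⟨t, ht⟩
    rcases eq_or_lt_of_le hρ0 with rfl | hρ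
    · simpa using hR0
    refine le_csInf ⟨_, by exact ⟨(circ_ne K C hK.2.1 hC.2.2).choose_spec.1,
      (circ_ne K C hK.2.1 hC.2.2).choose_spec.2⟩⟩ ?_
    rintro ρ' ⟨hρ', t', ht'⟩
    have hmem : ρ' / ρ ∈ {σ : ℝ | 0 < σ ∧ ∃ u : Fin n → ℝ, -K ⊆ u +ᵥ σ • K} := by
      refine ⟨by positivity, -t' - (ρ'/ρ) • t, fun z hz => ?_⟩
      obtain ⟨x, hx, rfl⟩ : ∃ x ∈ K, z = -x :=
        ⟨-z, Set.mem_neg.1 hz, (neg_neg z).symm⟩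
      obtain ⟨c, hc, hxc⟩ := mem_tr.1 (ht' hx)
      have hk0 : t + ρ • (-c) ∈ K := ht (mem_tr.2 ⟨-c, Set.neg_mem_neg.2 hc, rfl⟩)
      refine mem_tr.2 ⟨t + ρ • (-c), hk0, ?_⟩
      rw [hxc]
      rw [smul_add, smul_smul, div_mul_cancel₀ _ hρ.ne']
      module
    have := csInf_le (circ_bddBelow (-K) K) hmem
    have h2 : asym K * ρ ≤ ρ' / ρ * ρ := mul_le_mul_of_nonneg_right this hρ0
    rwa [div_mul_cancel₀ _ hρ.ne'] at h2
  by_cases hbdd : BddAbove {ρ : ℝ | 0 ≤ ρ ∧ ∃ t : Fin n → ℝ, t +ᵥ ρ • (-C) ⊆ K}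
  · rcases eq_or_lt_of_le (asym_nonneg K) with hs0 | hs0
    · -- asym = 0
      rw [← hs0, zero_mul]; exact hR0
    · have hne : {ρ : ℝ | 0 ≤ ρ ∧ ∃ t : Fin n → ℝ, t +ᵥ ρ • (-C) ⊆ K}.Nonempty := by
        obtain ⟨k, hk⟩ := hK.2.2
        refine ⟨0, le_rfl, k, fun z hz => ?_⟩
        obtain ⟨c, hc, rfl⟩ := mem_tr.1 hz
        simpa using interior_subset hk
      have : inrad K (-C) ≤ circR K C / asym K := by
        refine csSup_le hne fun ρ ⟨h1, h2⟩ => ?_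
        rw [le_div_iff₀ hs0, mul_comm]
        exact key ρ h1 h2
      calc asym K * inrad K (-C) ≤ asym K * (circR K C / asym K) :=
            mul_le_mul_of_nonneg_left this hs0.le
        _ = circR K C := by field_simp
  · rw [inrad, Real.sSup_of_not_bddAbove hbdd, mul_zero]; exact hR0

lemma inrad_nonneg (K C : Set (Fin n → ℝ)) (hKne : K.Nonempty) (hCne : C.Nonempty) :
    0 ≤ inrad K C := by
  by_cases hbdd : BddAbove {ρ : ℝ | 0 ≤ ρ ∧ ∃ t : Fin n → ℝ, t +ᵥ ρ • C ⊆ K}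
  · obtain ⟨k, hk⟩ := hKne
    refine le_csSup hbdd ⟨le_rfl, k, fun z hz => ?_⟩
    obtain ⟨c, hc, rfl⟩ := mem_tr.1 hz
    simpa using hk
  · rw [inrad, Real.sSup_of_not_bddAbove hbdd]

lemma asym_ge_one (hn : 0 < n) (K : Set (Fin n → ℝ)) (hK : IsBody K) :
    1 ≤ asym K := by
  have hne := circ_ne (-K) K hK.2.1.neg hK.2.2
  refine le_csInf ⟨_, hne.choose_spec.1, hne.choose_spec.2⟩ ?_
  rintro σ ⟨hσ, t, ht⟩
  -- diam K > 0
  obtain ⟨c, hc⟩ := hK.2.2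
  obtain ⟨ε, hε, hball⟩ := Metric.isOpen_iff.1 isOpen_interior c hc
  set u : Fin n → ℝ := fun _ => ε / 2 with hu
  haveI : Nonempty (Fin n) := Fin.pos_iff_nonempty.mp hn
  have hnu : ‖u‖ = ε / 2 := by
    rw [hu, pi_norm_const, Real.norm_eq_abs, abs_of_pos (by positivity)]
  have hq : c + u ∈ K := by
    refine interior_subset (hball ?_)
    rw [Metric.mem_ball, dist_eq_norm, add_sub_cancel_left, hnu]
    linarith
  have hp : c ∈ K := interior_subset hc
  have hbd := hK.2.1.isBounded
  have hdpos : 0 < Metric.diam K := by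
    have := Metric.dist_le_diam_of_mem hbd hp hq
    rw [dist_eq_norm] at this
    have : ε / 2 ≤ Metric.diam K := by rwa [show c - (c + u) = -u by abel, norm_neg, hnu] at this
    linarith
  have hdle : Metric.diam K ≤ σ * Metric.diam K := by
    refine Metric.diam_le_of_forall_dist_le (by positivity) ?_
    intro x hx y hy
    obtain ⟨a, ha, hxa⟩ := mem_tr.1 (ht (Set.neg_mem_neg.2 hx))
    obtain ⟨b, hb, hyb⟩ := mem_tr.1 (ht (Set.neg_mem_neg.2 hy))
    have : x - y = σ • (b - a) := by
      have h1 : -x = t + σ • a := hxa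
      have h2 : -y = t + σ • b := hyb
      have := congrArg₂ (· - ·) h2 h1
      rw [smul_sub]
      rw [show -y - -x = x - y by abel] at this
      linear_combination (norm := module) this
    calc dist x y = ‖x - y‖ := dist_eq_norm x y
      _ = σ * ‖b - a‖ := by rw [this, norm_smul, Real.norm_eq_abs, abs_of_pos hσ]
      _ ≤ σ * Metric.diam K := by
          refine mul_le_mul_of_nonneg_left ?_ hσ.le
          rw [← dist_eq_norm]
          exact Metric.dist_le_diam_of_mem hbd hb ha
  nlinarith

lemma bohnen (K C : Set (Fin n → ℝ)) (hK : IsBody K) (hC : IsBody C) :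
    circR K C ≤ (asym K / (1 + asym K)) * ((1 + asym C) * (diamC K C / 2)) := by
  obtain ⟨c₀, hc₀⟩ := hC.2.2
  have hc₀C : c₀ ∈ C := interior_subset hc₀
  obtain ⟨k₀, hk₀⟩ := hK.2.2
  have hk₀K : k₀ ∈ K := interior_subset hk₀
  obtain ⟨ρh, hρh, th, hth⟩ := circ_ne K C hK.2.1 hC.2.2
  set s := asym K with hs
  set sC := asym C with hsC
  set D := diamC K C with hD
  have hs0 : 0 ≤ s := asym_nonneg K
  have hsC0 : 0 ≤ sC := asym_nonneg C
  have hAKne : {σ : ℝ | 0 < σ ∧ ∃ t : Fin n → ℝ, -K ⊆ t +ᵥ σ • K}.Nonempty := by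
    obtain ⟨ρ, h1, h2⟩ := circ_ne (-K) K hK.2.1.neg hK.2.2
    exact ⟨ρ, h1, h2⟩
  have hACne : {σ : ℝ | 0 < σ ∧ ∃ t : Fin n → ℝ, -C ⊆ t +ᵥ σ • C}.Nonempty := by
    obtain ⟨ρ, h1, h2⟩ := circ_ne (-C) C hC.2.1.neg hC.2.2
    exact ⟨ρ, h1, h2⟩
  -- segment circumradius facts
  have hsegne : ∀ x ∈ K, ∀ y ∈ K,
      ρh ∈ {ρ : ℝ | 0 < ρ ∧ ∃ t : Fin n → ℝ, segment ℝ x y ⊆ t +ᵥ ρ • C} := by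
    intro x hx y hy
    exact ⟨hρh, th, fun z hz => hth (hK.1.segment_subset hx hy hz)⟩
  have hDSbdd : BddAbove {d : ℝ | ∃ x ∈ K, ∃ y ∈ K, d = 2 * circR (segment ℝ x y) C} := by
    refine ⟨2 * ρh, ?_⟩
    rintro d ⟨x, hx, y, hy, rfl⟩
    have := csInf_le (circ_bddBelow (segment ℝ x y) C) (hsegne x hx y hy)
    simpa [circR] using by linarith
  have hDSle : ∀ x ∈ K, ∀ y ∈ K, 2 * circR (segment ℝ x y) C ≤ D :=
    fun x hx y hy => le_csSup hDSbdd ⟨x, hx, y, hy, rfl⟩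
  have hD0 : 0 ≤ D := by
    have h1 := hDSle k₀ hk₀K k₀ hk₀K
    have h2 := circR_nonneg (segment ℝ k₀ k₀) C
    linarith
  -- main estimate for every e > 0
  have main : ∀ e : ℝ, 0 < e →
      circR K C ≤ ((s + e) / (1 + (s + e))) * ((1 + (sC + e)) * (D / 2 + e)) := by
    intro e he
    obtain ⟨σ, ⟨hσ0, t₁, ht₁⟩, hσlt⟩ := Real.lt_sInf_add_pos hAKne he
    obtain ⟨τ, ⟨hτ0, t₃, ht₃⟩, hτlt⟩ := Real.lt_sInf_add_pos hACne he
    set δ : ℝ := D / 2 + e with hδdef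
    have hδ : 0 < δ := by positivity
    have hδne : δ ≠ 0 := hδ.ne'
    have h1σ : (1 : ℝ) + σ ≠ 0 := by positivity
    have h1τ : (1 : ℝ) + τ ≠ 0 := by positivity
    have step : circR K C ≤ (σ/(1+σ)) * ((1+τ) * δ) := by
      refine circR_le (by positivity) ?_
      refine ⟨-(1+σ)⁻¹ • t₁ + ((σ/(1+σ)) * δ) • t₃, fun x hx => ?_⟩
      obtain ⟨k₁, hk₁, h1⟩ := mem_tr.1 (ht₁ (Set.neg_mem_neg.2 hx))
      have hseg : ∃ ρ₂ ∈ {ρ : ℝ | 0 < ρ ∧ ∃ t : Fin n → ℝ, segment ℝ x k₁ ⊆ t +ᵥ ρ • C},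
          ρ₂ < δ := by
        refine (csInf_lt_iff (circ_bddBelow _ C) ⟨ρh, hsegne x hx k₁ hk₁⟩).1 ?_
        have hle := hDSle x hx k₁ hk₁
        calc sInf {ρ : ℝ | 0 < ρ ∧ ∃ t : Fin n → ℝ, segment ℝ x k₁ ⊆ t +ᵥ ρ • C}
            = circR (segment ℝ x k₁) C := rfl
          _ ≤ D / 2 := by linarith
          _ < δ := by rw [hδdef]; linarith
      obtain ⟨ρ₂, ⟨hρ₂0, t₂, ht₂⟩, hρ₂δ⟩ := hseg
      obtain ⟨c₁, hc₁, h2⟩ := mem_tr.1 (ht₂ (left_mem_segment ℝ x k₁))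
      obtain ⟨c₂, hc₂, h3⟩ := mem_tr.1 (ht₂ (right_mem_segment ℝ x k₁))
      have hCC : Convex ℝ (C - C) := hC.1.sub hC.1
      have h0CC : (0 : Fin n → ℝ) ∈ C - C := ⟨c₀, hc₀C, c₀, hc₀C, sub_self c₀⟩
      have hwmem : (ρ₂/δ) • (c₁ - c₂) ∈ C - C :=
        hCC.smul_mem_of_zero_mem h0CC (Set.sub_mem_sub hc₁ hc₂)
          ⟨by positivity, (div_le_one hδ).2 hρ₂δ.le⟩
      obtain ⟨e₁, he₁, e₂, he₂, hw5⟩ := hwmem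
      obtain ⟨e₃, he₃, h6⟩ := mem_tr.1 (ht₃ (Set.neg_mem_neg.2 he₂))
      refine mem_tr.2 ⟨(1/(1+τ)) • e₁ + (τ/(1+τ)) • e₃,
        hC.1 he₁ he₃ (by positivity) (by positivity) (by field_simp), ?_⟩
      linear_combination (norm := match_scalars <;> field_simp <;> ring)
        (-(1+σ)⁻¹ : ℝ) • h1 + (σ/(1+σ)) • h2 + (-(σ/(1+σ)) : ℝ) • h3
        + (-(σ*δ/(1+σ)) : ℝ) • hw5 + (σ*δ/(1+σ)) • h6
    have mono : (σ/(1+σ)) * ((1+τ) * δ) ≤ ((s+e)/(1+(s+e))) * ((1+(sC+e)) * δ) := by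
      have hσle : σ ≤ s + e := by
        have : sInf {σ : ℝ | 0 < σ ∧ ∃ t : Fin n → ℝ, -K ⊆ t +ᵥ σ • K} = s := rfl
        linarith [hσlt]
      have hτle : τ ≤ sC + e := by
        have : sInf {σ : ℝ | 0 < σ ∧ ∃ t : Fin n → ℝ, -C ⊆ t +ᵥ σ • C} = sC := rfl
        linarith [hτlt]
      have h1 : σ/(1+σ) ≤ (s+e)/(1+(s+e)) := by
        rw [div_le_div_iff₀ (by positivity) (by positivity)]
        nlinarith
      have h2 : (1+τ) * δ ≤ (1+(sC+e)) * δ := by nlinarith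
      have h3 : (0:ℝ) ≤ σ/(1+σ) := by positivity
      have h4 : (0:ℝ) ≤ (1+(sC+e)) * δ := by positivity
      calc (σ/(1+σ)) * ((1+τ) * δ) ≤ (σ/(1+σ)) * ((1+(sC+e)) * δ) :=
            mul_le_mul_of_nonneg_left h2 h3
        _ ≤ ((s+e)/(1+(s+e))) * ((1+(sC+e)) * δ) := mul_le_mul_of_nonneg_right h1 h4
    exact le_trans step mono
  -- pass to the limit e → 0⁺
  have hlim : Filter.Tendsto
      (fun e : ℝ => ((s + e) / (1 + (s + e))) * ((1 + (sC + e)) * (D / 2 + e)))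
      (nhdsWithin 0 (Set.Ioi 0))
      (nhds ((s / (1 + s)) * ((1 + sC) * (D / 2)))) := by
    have hcont : ContinuousAt
        (fun e : ℝ => ((s + e) / (1 + (s + e))) * ((1 + (sC + e)) * (D / 2 + e))) 0 := by
      have h1 : (1 : ℝ) + (s + 0) ≠ 0 := by positivity
      fun_prop (disch := assumption)
    have := hcont.tendsto
    simp only [add_zero] at this
    exact this.mono_left nhdsWithin_le_nhds
  refine ge_of_tendsto hlim ?_
  filter_upwards [self_mem_nhdsWithin] with e he
  exact main e he

theorem stmt9 {n : ℕ} (K C : Set (Fin n → ℝ)) (hK : IsBody K) (hC : IsBody C) :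
    (1 + asym K) * inrad K (-C) ≤ inrad K (-C) + circR K C ∧
    inrad K (-C) + circR K C ≤ ((1 + asym K) / asym K) * circR K C ∧
    ((1 + asym K) / asym K) * circR K C ≤ (1 / 2) * (1 + asym C) * diamC K C := by
  obtain ⟨k₀, hk₀⟩ := hK.2.2
  have hk₀K : k₀ ∈ K := interior_subset hk₀
  obtain ⟨c₀, hc₀⟩ := hC.2.2
  have hc₀C : c₀ ∈ C := interior_subset hc₀
  rcases Nat.eq_zero_or_pos n with hn | hn
  · -- degenerate case n = 0
    subst hn
    haveI : Subsingleton (Fin 0 → ℝ) := ⟨fun a b => funext fun i => i.elim0⟩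
    have hcirc : ∀ A B : Set (Fin 0 → ℝ), B.Nonempty → circR A B = 0 := by
      intro A B ⟨b, hb⟩
      have : {ρ : ℝ | 0 < ρ ∧ ∃ t : Fin 0 → ℝ, A ⊆ t +ᵥ ρ • B} = Set.Ioi 0 := by
        ext ρ
        constructor
        · rintro ⟨h, -⟩; exact h
        · intro h
          exact ⟨h, b, fun a _ => mem_tr.2 ⟨b, hb, Subsingleton.elim _ _⟩⟩
      rw [circR, this, csInf_Ioi]
    have hinr : inrad K (-C) = 0 := by
      have hnb : ¬BddAbove {ρ : ℝ | 0 ≤ ρ ∧ ∃ t : Fin 0 → ℝ, t +ᵥ ρ • (-C) ⊆ K} := by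
        rintro ⟨b, hb⟩
        have hmem : max b 0 + 1 ∈ {ρ : ℝ | 0 ≤ ρ ∧ ∃ t : Fin 0 → ℝ, t +ᵥ ρ • (-C) ⊆ K} := by
          refine ⟨by positivity, k₀, fun z _ => ?_⟩
          rw [Subsingleton.elim z k₀]; exact hk₀K
        have := hb hmem
        have h2 := le_max_left b 0
        linarith
      rw [inrad, Real.sSup_of_not_bddAbove hnb]
    have hasK : asym K = 0 := hcirc (-K) K ⟨k₀, hk₀K⟩
    have hasC : asym C = 0 := hcirc (-C) C ⟨c₀, hc₀C⟩
    have hdiam : diamC K C = 0 := by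
      have : {d : ℝ | ∃ x ∈ K, ∃ y ∈ K, d = 2 * circR (segment ℝ x y) C} = {0} := by
        ext d
        constructor
        · rintro ⟨x, hx, y, hy, rfl⟩
          rw [hcirc _ _ ⟨c₀, hc₀C⟩]; simp
        · rintro rfl
          exact ⟨k₀, hk₀K, k₀, hk₀K, by rw [hcirc _ _ ⟨c₀, hc₀C⟩]; simp⟩
      rw [diamC, this, csSup_singleton]
    rw [hinr, hasK, hasC, hdiam, hcirc K C ⟨c₀, hc₀C⟩]
    norm_num
  · -- main case n ≥ 1
    have hs1 : 1 ≤ asym K := asym_ge_one hn K hK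
    have hs0 : 0 < asym K := by linarith
    have hf := fact1 K C hK hC
    have hr0 : 0 ≤ inrad K (-C) := inrad_nonneg K (-C) ⟨k₀, hk₀K⟩ ⟨-c₀, Set.neg_mem_neg.2 hc₀C⟩
    have hR0 := circR_nonneg K C
    have hsC0 := asym_nonneg C
    have hb := bohnen K C hK hC
    refine ⟨by nlinarith, ?_, ?_⟩
    · rw [div_mul_eq_mul_div, le_div_iff₀ hs0]
      nlinarith
    · have h1s : (1 : ℝ) + asym K ≠ 0 := by positivity
      calc ((1 + asym K) / asym K) * circR K C
          ≤ ((1 + asym K) / asym K) *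
            ((asym K / (1 + asym K)) * ((1 + asym C) * (diamC K C / 2))) :=
            mul_le_mul_of_nonneg_left hb (by positivity)
        _ = (1 / 2) * (1 + asym C) * diamC K C := by
            field_simp
end

section
/- For any convex bodies K, C in R^n, the inclusions ((s(K)+1)/s(K))·K ⊂ (translate of) K−K ⊂ (D(K,C)/2)·(C−C) ⊂ (translate of) (D(K,C)/2)(s(C)+1)·C hold, where the inclusions of the first and last are up to translation. -/
open Pointwise Metric Filter

section Helpers

lemma cover_exists {n : ℕ} {A C : Set (Fin n → ℝ)} (hA : Bornology.IsBounded A)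
    (hC : (interior C).Nonempty) :
    ∃ ρ : ℝ, 0 < ρ ∧ ∃ t : Fin n → ℝ, A ⊆ t +ᵥ ρ • C := by
  obtain ⟨c, hc⟩ := hC
  obtain ⟨ε, hε, hball⟩ := Metric.mem_nhds_iff.1 (mem_interior_iff_mem_nhds.1 hc)
  obtain ⟨R, hR⟩ := hA.subset_ball 0
  have hR1 : A ⊆ ball 0 (max R 1) := hR.trans (Metric.ball_subset_ball (le_max_left _ _))
  set ρ := (max R 1) / ε with hρdef
  have hρ : 0 < ρ := div_pos (lt_of_lt_of_le one_pos (le_max_right _ _)) hε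
  refine ⟨ρ, hρ, -(ρ • c), fun x hx => ?_⟩
  rw [Set.mem_vadd_set]
  refine ⟨ρ • c + x, ?_, by simp [vadd_eq_add]⟩
  have : ρ • c + x ∈ ρ • ball c ε := by
    rw [_root_.smul_ball (ne_of_gt hρ)]
    have hx' : x ∈ ball 0 (max R 1) := hR1 hx
    simp only [mem_ball] at hx' ⊢
    have : dist (ρ • c + x) (ρ • c) = dist x 0 := by simp [dist_eq_norm]
    rw [this]
    calc dist x 0 < max R 1 := hx'
      _ = ‖ρ‖ * ε := by rw [Real.norm_of_nonneg hρ.le, hρdef, div_mul_cancel₀ _ (ne_of_gt hε)]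
  exact Set.smul_set_mono hball this

lemma attain {n : ℕ} {A C : Set (Fin n → ℝ)} (hAne : A.Nonempty) (hCc : IsCompact C)
    (hS : {ρ : ℝ | 0 < ρ ∧ ∃ t : Fin n → ℝ, A ⊆ t +ᵥ ρ • C}.Nonempty) :
    ∃ t : Fin n → ℝ, A ⊆ t +ᵥ (sInf {ρ : ℝ | 0 < ρ ∧ ∃ t : Fin n → ℝ, A ⊆ t +ᵥ ρ • C}) • C := by
  set S := {ρ : ℝ | 0 < ρ ∧ ∃ t : Fin n → ℝ, A ⊆ t +ᵥ ρ • C} with hSdef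
  have hbdd : BddBelow S := ⟨0, fun x hx => hx.1.le⟩
  set s := sInf S with hs
  have hchoice : ∀ k : ℕ, ∃ ρ ∈ S, ρ < s + 1/(k+1) := by
    intro k
    have : sInf S < s + 1/(k+1) := by
      rw [← hs]
      have : (0:ℝ) < 1/(k+1) := by positivity
      linarith
    exact (csInf_lt_iff hbdd hS).1 this
  choose ρ hρS hρlt using hchoice
  have hρge : ∀ k, s ≤ ρ k := fun k => csInf_le hbdd (hρS k)
  have hρtend : Tendsto ρ atTop (nhds s) := by
    have h1 : Tendsto (fun k : ℕ => s + 1/(k+1 : ℝ)) atTop (nhds s) := by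
      have : Tendsto (fun n : ℕ => 1 / ((n : ℝ) + 1)) atTop (nhds 0) :=
        tendsto_one_div_add_atTop_nhds_zero_nat
      simpa using (tendsto_const_nhds (x := s)).add this
    exact tendsto_of_tendsto_of_tendsto_of_le_of_le tendsto_const_nhds h1 hρge
      (fun k => (hρlt k).le)
  choose tk htk using fun k => (hρS k).2
  obtain ⟨a₀, ha₀⟩ := hAne
  have hmem : ∀ k, ∃ c ∈ C, tk k + ρ k • c = a₀ := by
    intro k
    obtain ⟨w, hw, hweq⟩ := Set.mem_vadd_set.1 (htk k ha₀)
    obtain ⟨c, hc, hceq⟩ := Set.mem_smul_set.1 hw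
    exact ⟨c, hc, by rw [hceq]; exact hweq⟩
  choose c' hc'C hc'eq using hmem
  obtain ⟨cl, hclC, φ, hφ, hφtend⟩ := hCc.tendsto_subseq hc'C
  have hρφ : Tendsto (ρ ∘ φ) atTop (nhds s) := hρtend.comp hφ.tendsto_atTop
  set t := a₀ - s • cl with ht
  have htktend : Tendsto (tk ∘ φ) atTop (nhds t) := by
    have : (tk ∘ φ) = fun k => a₀ - (ρ (φ k)) • (c' (φ k)) := by
      funext k
      simp only [Function.comp_apply]
      exact eq_sub_of_add_eq (hc'eq (φ k))
    rw [this, ht]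
    exact (tendsto_const_nhds).sub (hρφ.smul hφtend)
  refine ⟨t, fun z hz => ?_⟩
  have hmemz : ∀ k, ∃ c ∈ C, tk k + ρ k • c = z := by
    intro k
    obtain ⟨w, hw, hweq⟩ := Set.mem_vadd_set.1 (htk k hz)
    obtain ⟨c, hc, hceq⟩ := Set.mem_smul_set.1 hw
    exact ⟨c, hc, by rw [hceq]; exact hweq⟩
  choose cz hczC hczeq using hmemz
  obtain ⟨czl, hczlC, ψ, hψ, hψtend⟩ := hCc.tendsto_subseq (fun k => hczC (φ k))
  have h1 : Tendsto (fun k => tk (φ (ψ k)) + ρ (φ (ψ k)) • cz (φ (ψ k))) atTop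
      (nhds (t + s • czl)) :=
    ((htktend.comp hψ.tendsto_atTop).add ((hρφ.comp hψ.tendsto_atTop).smul hψtend))
  have h2 : (fun k => tk (φ (ψ k)) + ρ (φ (ψ k)) • cz (φ (ψ k))) = fun _ => z := by
    funext k; exact hczeq (φ (ψ k))
  rw [h2] at h1
  have hz_eq : z = t + s • czl := tendsto_nhds_unique tendsto_const_nhds h1
  rw [Set.mem_vadd_set]
  exact ⟨s • czl, Set.smul_mem_smul_set hczlC, by rw [hz_eq]; rfl⟩

lemma exists_two_points {n : ℕ} (hn : 0 < n) {K : Set (Fin n → ℝ)}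
    (hK : (interior K).Nonempty) : ∃ x ∈ K, ∃ y ∈ K, x ≠ y := by
  obtain ⟨x, hx⟩ := hK
  obtain ⟨ε, hε, hball⟩ := Metric.mem_nhds_iff.1 (mem_interior_iff_mem_nhds.1 hx)
  haveI : Nonempty (Fin n) := ⟨⟨0, hn⟩⟩
  refine ⟨x, interior_subset hx, x + (fun _ => ε/2), hball ?_, ?_⟩
  · rw [mem_ball]
    have : dist (x + fun _ => ε/2) x = ‖(fun _ => ε/2 : Fin n → ℝ)‖ := by
      rw [dist_eq_norm]; congr 1; abel
    rw [this, pi_norm_const]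
    rw [Real.norm_of_nonneg (by linarith)]
    linarith
  · intro h
    have := congrFun h ⟨0, hn⟩
    simp only [Pi.add_apply] at this
    linarith [(by linarith : (0:ℝ) < ε/2), this.symm ▸ (by linarith : x ⟨0, hn⟩ = x ⟨0, hn⟩)]

lemma one_le_rho {n : ℕ} {K : Set (Fin n → ℝ)} (hKb : Bornology.IsBounded K)
    {x y : Fin n → ℝ} (hx : x ∈ K) (hy : y ∈ K) (hxy : x ≠ y)
    {ρ : ℝ} (hρ : 0 < ρ) {t : Fin n → ℝ} (hsub : -K ⊆ t +ᵥ ρ • K) : 1 ≤ ρ := by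
  have hdiam : 0 < diam K := by
    have h1 : 0 < dist x y := dist_pos.2 hxy
    linarith [dist_le_diam_of_mem hKb hx hy]
  have key : diam K ≤ ρ * diam K := by
    apply diam_le_of_forall_dist_le (by positivity)
    intro a ha b hb
    obtain ⟨wa, hwa, hwaeq⟩ := Set.mem_vadd_set.1 (hsub (Set.neg_mem_neg.2 ha))
    obtain ⟨ca, hca, hcaeq⟩ := Set.mem_smul_set.1 hwa
    obtain ⟨wb, hwb, hwbeq⟩ := Set.mem_vadd_set.1 (hsub (Set.neg_mem_neg.2 hb))
    obtain ⟨cb, hcb, hcbeq⟩ := Set.mem_smul_set.1 hwb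
    have : dist a b = dist (ρ • ca) (ρ • cb) := by
      rw [← hcaeq] at hwaeq; rw [← hcbeq] at hwbeq
      rw [vadd_eq_add] at hwaeq hwbeq
      have ha' : a = -(t + ρ • ca) := by rw [hwaeq, neg_neg]
      have hb' : b = -(t + ρ • cb) := by rw [hwbeq, neg_neg]
      rw [ha', hb', dist_neg_neg, dist_add_left]
    rw [this, dist_smul₀, Real.norm_of_nonneg hρ.le]
    exact mul_le_mul_of_nonneg_left (dist_le_diam_of_mem hKb hca hcb) hρ.le
  nlinarith

lemma smul_subset_smul_of_le {n : ℕ} {S : Set (Fin n → ℝ)} (hS : Convex ℝ S)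
    (h0 : (0:Fin n → ℝ) ∈ S) {a b : ℝ} (ha : 0 ≤ a) (hab : a ≤ b) : a • S ⊆ b • S := by
  rcases eq_or_lt_of_le (ha.trans hab) with hb | hb
  · have ha0 : a = 0 := le_antisymm (hab.trans hb.symm.le) ha
    rw [ha0, ← hb]
  · intro z hz
    obtain ⟨w, hw, hweq⟩ := Set.mem_smul_set.1 hz
    refine Set.mem_smul_set.2 ⟨(a/b) • w, ?_, ?_⟩
    · have := hS.segment_subset h0 hw
      have hmem : (a/b) • w ∈ segment ℝ (0:Fin n → ℝ) w :=
        ⟨1 - a/b, a/b, by rw [sub_nonneg, div_le_one hb]; exact hab, by positivity, by ring,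
          by simp⟩
      exact this hmem
    · rw [← hweq, smul_smul, mul_div_cancel₀ _ hb.ne']

end Helpers

theorem stmt12 {n : ℕ} (K C : Set (Fin n → ℝ)) (hK : IsBody K) (hC : IsBody C) :
    SubsetT (((asym K + 1) / asym K) • K) (K - K) ∧
    K - K ⊆ (diamC K C / 2) • (C - C) ∧
    SubsetT ((diamC K C / 2) • (C - C)) ((diamC K C / 2 * (asym C + 1)) • C) := by
  obtain ⟨hKconv, hKcomp, hKint⟩ := hK
  obtain ⟨hCconv, hCcomp, hCint⟩ := hC
  have hKne : K.Nonempty := hKint.mono interior_subset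
  have hCne : C.Nonempty := hCint.mono interior_subset
  rcases Nat.eq_zero_or_pos n with hn | hn
  · -- degenerate case: the space is a single point
    subst hn
    haveI : Subsingleton (Fin 0 → ℝ) :=
      ⟨fun a b => funext fun i => absurd i.2 (by omega)⟩
    have triv : ∀ (A B : Set (Fin 0 → ℝ)), B.Nonempty → A ⊆ B := by
      rintro A B ⟨w, hw⟩ z _
      rwa [Subsingleton.elim z w]
    obtain ⟨k, hk⟩ := hKne
    obtain ⟨c, hc⟩ := hCne
    refine ⟨⟨0, triv _ _ ⟨(0 : Fin 0 → ℝ) +ᵥ (k - k),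
        Set.vadd_mem_vadd_set (Set.sub_mem_sub hk hk)⟩⟩,
      triv _ _ ⟨(diamC K C / 2) • (c - c),
        Set.smul_mem_smul_set (Set.sub_mem_sub hc hc)⟩,
      ⟨0, triv _ _ ⟨(0 : Fin 0 → ℝ) +ᵥ (diamC K C / 2 * (asym C + 1)) • c,
        Set.vadd_mem_vadd_set (Set.smul_mem_smul_set hc)⟩⟩⟩
  -- main case n ≥ 1
  have hKb : Bornology.IsBounded K := hKcomp.isBounded
  have hCb : Bornology.IsBounded C := hCcomp.isBounded
  obtain ⟨x₀, hx₀, y₀, hy₀, hxy₀⟩ := exists_two_points hn hKint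
  obtain ⟨x₁, hx₁, y₁, hy₁, hxy₁⟩ := exists_two_points hn hCint
  -- asymmetry of K
  have hSKne : {ρ : ℝ | 0 < ρ ∧ ∃ t : Fin n → ℝ, -K ⊆ t +ᵥ ρ • K}.Nonempty := by
    obtain ⟨ρ, hρ, t, ht⟩ := cover_exists hKb.neg hKint
    exact ⟨ρ, hρ, t, ht⟩
  have hsK1 : 1 ≤ asym K := by
    apply le_csInf hSKne
    rintro ρ ⟨hρpos, t, ht⟩
    exact one_le_rho hKb hx₀ hy₀ hxy₀ hρpos ht
  have hsK0 : (0:ℝ) < asym K := lt_of_lt_of_le one_pos hsK1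
  obtain ⟨tK, htK⟩ : ∃ t : Fin n → ℝ, -K ⊆ t +ᵥ (asym K) • K :=
    attain hKne.neg hKcomp hSKne
  -- asymmetry of C
  have hSCne : {ρ : ℝ | 0 < ρ ∧ ∃ t : Fin n → ℝ, -C ⊆ t +ᵥ ρ • C}.Nonempty := by
    obtain ⟨ρ, hρ, t, ht⟩ := cover_exists hCb.neg hCint
    exact ⟨ρ, hρ, t, ht⟩
  have hsC1 : 1 ≤ asym C := by
    apply le_csInf hSCne
    rintro ρ ⟨hρpos, t, ht⟩
    exact one_le_rho hCb hx₁ hy₁ hxy₁ hρpos ht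
  have hsC0 : (0:ℝ) < asym C := lt_of_lt_of_le one_pos hsC1
  obtain ⟨tC, htC⟩ : ∃ t : Fin n → ℝ, -C ⊆ t +ᵥ (asym C) • C :=
    attain hCne.neg hCcomp hSCne
  -- a global covering of K by C
  obtain ⟨ρ₀, hρ₀, t₀, ht₀⟩ := cover_exists hKb hCint
  -- boundedness of the diameter set
  have hDbdd : BddAbove {d : ℝ | ∃ x ∈ K, ∃ y ∈ K, d = 2 * circR (segment ℝ x y) C} := by
    refine ⟨2 * ρ₀, ?_⟩
    rintro d ⟨x, hx, y, hy, rfl⟩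
    have hseg : segment ℝ x y ⊆ K := hKconv.segment_subset hx hy
    have hmem : ρ₀ ∈ {ρ : ℝ | 0 < ρ ∧ ∃ t : Fin n → ℝ, segment ℝ x y ⊆ t +ᵥ ρ • C} :=
      ⟨hρ₀, t₀, hseg.trans ht₀⟩
    have : circR (segment ℝ x y) C ≤ ρ₀ := csInf_le ⟨0, fun z hz => hz.1.le⟩ hmem
    linarith
  refine ⟨?_, ?_, ?_⟩
  · -- Part 1
    refine ⟨-((1 / asym K) • tK), fun z hz => ?_⟩
    obtain ⟨x, hx, hzeq⟩ := Set.mem_smul_set.1 hz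
    obtain ⟨w, hw, hweq⟩ := Set.mem_vadd_set.1 (htK (Set.neg_mem_neg.2 hx))
    obtain ⟨k, hkK, hkeq⟩ := Set.mem_smul_set.1 hw
    rw [← hkeq, vadd_eq_add] at hweq
    -- hweq : tK + asym K • k = -x
    rw [Set.mem_vadd_set]
    refine ⟨x - k, Set.sub_mem_sub hx hkK, ?_⟩
    have hs : asym K ≠ 0 := hsK0.ne'
    have hk : k = (1 / asym K) • (-x - tK) := by
      have h1 : asym K • k = -x - tK := eq_sub_of_add_eq' hweq
      rw [← h1, smul_smul, one_div, inv_mul_cancel₀ hs, one_smul]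
    rw [vadd_eq_add, ← hzeq, hk]
    match_scalars <;> field_simp <;> ring
  · -- Part 2
    rintro z hz
    obtain ⟨x, hx, y, hy, rfl⟩ := Set.mem_sub.1 hz
    set r := circR (segment ℝ x y) C with hr
    have hsegne : (segment ℝ x y).Nonempty := ⟨x, left_mem_segment ℝ x y⟩
    have hseg : segment ℝ x y ⊆ K := hKconv.segment_subset hx hy
    have hSsegne : {ρ : ℝ | 0 < ρ ∧ ∃ t : Fin n → ℝ, segment ℝ x y ⊆ t +ᵥ ρ • C}.Nonempty :=
      ⟨ρ₀, hρ₀, t₀, hseg.trans ht₀⟩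
    obtain ⟨t, ht⟩ : ∃ t : Fin n → ℝ, segment ℝ x y ⊆ t +ᵥ r • C :=
      attain hsegne hCcomp hSsegne
    have hr0 : 0 ≤ r := Real.sInf_nonneg (fun ρ hρ => hρ.1.le)
    have hrD : r ≤ diamC K C / 2 := by
      have : 2 * r ≤ diamC K C := le_csSup hDbdd ⟨x, hx, y, hy, rfl⟩
      linarith
    obtain ⟨wx, hwx, hwxeq⟩ := Set.mem_vadd_set.1 (ht (left_mem_segment ℝ x y))
    obtain ⟨cx, hcx, hcxeq⟩ := Set.mem_smul_set.1 hwx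
    obtain ⟨wy, hwy, hwyeq⟩ := Set.mem_vadd_set.1 (ht (right_mem_segment ℝ x y))
    obtain ⟨cy, hcy, hcyeq⟩ := Set.mem_smul_set.1 hwy
    rw [← hcxeq, vadd_eq_add] at hwxeq
    rw [← hcyeq, vadd_eq_add] at hwyeq
    have hz' : x - y ∈ r • (C - C) := by
      refine Set.mem_smul_set.2 ⟨cx - cy, Set.sub_mem_sub hcx hcy, ?_⟩
      rw [← hwxeq, ← hwyeq]
      module
    have h0CC : (0 : Fin n → ℝ) ∈ C - C := by
      simpa using Set.sub_mem_sub hx₁ hx₁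
    exact smul_subset_smul_of_le (hCconv.sub hCconv) h0CC hr0 hrD hz'
  · -- Part 3
    refine ⟨(diamC K C / 2) • tC, fun z hz => ?_⟩
    obtain ⟨w, hw, hzeq⟩ := Set.mem_smul_set.1 hz
    obtain ⟨c₁, hc₁, c₂, hc₂, rfl⟩ := Set.mem_sub.1 hw
    obtain ⟨w', hw', hw'eq⟩ := Set.mem_vadd_set.1 (htC (Set.neg_mem_neg.2 hc₂))
    obtain ⟨c₃, hc₃, hc₃eq⟩ := Set.mem_smul_set.1 hw'
    rw [← hc₃eq, vadd_eq_add] at hw'eq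
    -- hw'eq : tC + asym C • c₃ = -c₂
    set sC := asym C
    have hden : (0:ℝ) < 1 + sC := by linarith
    set m := (1/(1+sC)) • c₁ + (sC/(1+sC)) • c₃ with hm
    have hmC : m ∈ C := by
      refine hCconv hc₁ hc₃ (by positivity) (by positivity) ?_
      field_simp
    rw [Set.mem_vadd_set]
    refine ⟨(diamC K C / 2 * (sC + 1)) • m, Set.smul_mem_smul_set hmC, ?_⟩
    have hden' : (1 + sC) ≠ 0 := hden.ne'
    have hc3 : c₃ = (1 / sC) • (-c₂ - tC) := by
      have h1 : sC • c₃ = -c₂ - tC := eq_sub_of_add_eq' hw'eq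
      rw [← h1, smul_smul, one_div, inv_mul_cancel₀ hsC0.ne', one_smul]
    rw [vadd_eq_add, ← hzeq, hm, hc3]
    match_scalars <;> field_simp <;> ring
end
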